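/- The function g(x) = (1/x)·log(1/(x·Γ(x))) is monotonically decreasing on (0, 1/2), and lim_{x→0⁺} g(x) = γ₀, where γ₀ = −Γ'(1) is the Euler–Mascheroni constant. -/

import Mathlib

noncomputable def g (x : ℝ) : ℝ := (1 / x) * Real.log (1 / (x * Real.Gamma x))

open Real Set Filter Topology

lemma g_eq {x : ℝ} (hx : 0 < x) : g x = -(Real.log (Real.Gamma (x + 1)) / x) := by
  rw [g, Real.Gamma_add_one hx.ne', one_div (x * Real.Gamma x), Real.log_inv]
  ring

/-- `g(x) = (1/x) log(1/(x Γ(x)))` is monotonically decreasing on `(0, 1/2)` and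
`g(x) → γ₀ = −Γ'(1)` as `x → 0⁺`. -/
theorem stmt_4 :
    StrictAntiOn g (Set.Ioo (0 : ℝ) (1 / 2)) ∧
      Filter.Tendsto g (nhdsWithin 0 (Set.Ioi 0)) (nhds (-(deriv Real.Gamma 1))) := by
  set f : ℝ → ℝ := fun x => Real.log (Real.Gamma (x + 1)) with hf
  constructor
  · intro x hx y hy hxy
    rw [g_eq hx.1, g_eq hy.1, neg_lt_neg_iff, div_lt_div_iff₀ hx.1 hy.1]
    have hx0 : 0 < x := hx.1
    have hy0 : 0 < y := hy.1
    set t : ℝ := x / y with ht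
    have ht0 : 0 < t := div_pos hx0 hy0
    have ht1 : t < 1 := (div_lt_one hy0).mpr hxy
    have hty : t * y = x := div_mul_cancel₀ x hy0.ne'
    -- convexity of log ∘ Gamma at points 2 and y+2
    have h1 : Real.log (Real.Gamma (x + 2)) ≤
        (1 - t) * Real.log (Real.Gamma 2) + t * Real.log (Real.Gamma (y + 2)) := by
      have := Real.convexOn_log_Gamma.2 (show (2:ℝ) ∈ Ioi 0 by norm_num)
        (show y + 2 ∈ Ioi 0 by simp; linarith) (by linarith : (0:ℝ) ≤ 1 - t) ht0.le
        (by ring)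
      simpa [smul_eq_mul, show (1 - t) * 2 + t * (y + 2) = x + 2 by rw [← hty]; ring,
        Function.comp] using this
    -- strict concavity of log at points 1 and y+1
    have h2 : (1 - t) * Real.log 1 + t * Real.log (y + 1) < Real.log (x + 1) := by
      have := strictConcaveOn_log_Ioi.2 (show (1:ℝ) ∈ Ioi 0 by norm_num)
        (show y + 1 ∈ Ioi 0 by simp; linarith) (ne_of_lt (by linarith : (1:ℝ) < y + 1))
        (by linarith : (0:ℝ) < 1 - t) ht0 (by ring)
      rw [show ((1 - t) • (1:ℝ) + t • (y + 1)) = x + 1 by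
        rw [smul_eq_mul, smul_eq_mul, ← hty]; ring] at this
      exact this
    rw [Real.Gamma_two, Real.log_one] at h1
    rw [Real.log_one] at h2
    -- rewrite Γ(x+2) = (x+1) Γ(x+1)
    have hsplit : ∀ z : ℝ, 0 < z →
        Real.log (Real.Gamma (z + 2)) = Real.log (z + 1) + Real.log (Real.Gamma (z + 1)) := by
      intro z hz
      rw [show z + 2 = (z + 1) + 1 by ring, Real.Gamma_add_one (by linarith : z + 1 ≠ 0),
        Real.log_mul (by linarith) (Real.Gamma_pos_of_pos (by linarith)).ne']
    have e1 := hsplit x hx0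
    have e2 := hsplit y hy0
    -- combine: y * log Γ(x+2) ≤ x * log Γ(y+2), x * log(y+1) < y * log(x+1)
    have c1 : y * Real.log (Real.Gamma (x + 2)) ≤ x * Real.log (Real.Gamma (y + 2)) := by
      have := mul_le_mul_of_nonneg_left h1 hy0.le
      rw [mul_add, ← mul_assoc, ← mul_assoc] at this
      calc y * Real.log (Real.Gamma (x + 2)) ≤ y * (1 - t) * 0 + y * t * Real.log (Real.Gamma (y + 2)) := by
            simpa using this
        _ = x * Real.log (Real.Gamma (y + 2)) := by rw [mul_comm y t]; rw [hty]; ring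
    have c2 : x * Real.log (y + 1) < y * Real.log (x + 1) := by
      have := mul_lt_mul_of_pos_left h2 hy0
      rw [mul_add, ← mul_assoc, ← mul_assoc] at this
      calc x * Real.log (y + 1) = y * t * Real.log (y + 1) := by rw [mul_comm y t, hty]
        _ = y * (1 - t) * 0 + y * t * Real.log (y + 1) := by ring
        _ < y * Real.log (x + 1) := by simpa using this
    nlinarith [c1, c2, e1, e2]
  · -- limit part
    have hne : ∀ m : ℕ, (1 : ℝ) ≠ -m := by
      intro m h
      have : (0:ℝ) ≤ (m:ℝ) := Nat.cast_nonneg m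
      nlinarith [h]
    have hΓ : DifferentiableAt ℝ Real.Gamma 1 := Real.differentiableAt_Gamma hne
    have hinner : HasDerivAt (fun x : ℝ => x + 1) 1 0 := (hasDerivAt_id 0).add_const 1
    have h1 : HasDerivAt (fun x : ℝ => Real.Gamma (x + 1)) (deriv Real.Gamma 1 * 1) 0 :=
      by have hg : HasDerivAt Real.Gamma (deriv Real.Gamma 1) ((0:ℝ) + 1) := by
           simpa using hΓ.hasDerivAt
         exact hg.comp 0 hinner
    have hΓ1 : Real.Gamma ((0:ℝ) + 1) ≠ 0 := by
      rw [zero_add, Real.Gamma_one]; norm_num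
    have h2 : HasDerivAt f (deriv Real.Gamma 1) 0 := by
      have := h1.log hΓ1
      simpa [Real.Gamma_one] using this
    have h3 : Tendsto (slope f 0) (𝓝[≠] 0) (𝓝 (deriv Real.Gamma 1)) :=
      hasDerivAt_iff_tendsto_slope.mp h2
    have h4 : Tendsto (slope f 0) (𝓝[>] 0) (𝓝 (deriv Real.Gamma 1)) :=
      h3.mono_left (nhdsWithin_mono _ (fun x hx => ne_of_gt hx))
    have h5 : Tendsto (fun x => -(slope f 0 x)) (𝓝[>] 0) (𝓝 (-(deriv Real.Gamma 1))) := h4.neg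
    refine h5.congr' ?_
    filter_upwards [self_mem_nhdsWithin] with x (hx : 0 < x)
    rw [slope_def_field, g_eq hx]
    have hf0 : f 0 = 0 := by simp [hf, Real.Gamma_one]
    rw [hf0]
    ring
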